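/- For all natural numbers k, ℓ ≥ 1 and all complex numbers x, y, z with x + y + z = 1, the following symmetric identity holds: (−1)^k · ∑_{j=0}^{k} C(k,j) · x^{k−j} · B_{ℓ+j+1}(y)/(ℓ+j+1) + (−1)^ℓ · ∑_{j=0}^{ℓ} C(ℓ,j) · x^{ℓ−j} · B_{k+j+1}(z)/(k+j+1) = (−x)^{k+ℓ+1}/((k+ℓ+1)·C(k+ℓ,k)). -/

import Mathlib

open Finset

/-- The `n`-th Bernoulli polynomial evaluated at a complex number `x`. -/
noncomputable def bernoulliPolyC (n : ℕ) (x : ℂ) : ℂ :=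
  ((Polynomial.bernoulli n).map (algebraMap ℚ ℂ)).eval x

namespace SymmBernoulliAux

open Polynomial

noncomputable def bp (m : ℕ) : Polynomial ℂ := (Polynomial.bernoulli m).map (algebraMap ℚ ℂ)

lemma bernoulli_comp_add_one (n : ℕ) :
    (Polynomial.bernoulli n).comp (X + 1) =
      Polynomial.bernoulli n + (n : ℚ[X]) * X ^ (n - 1) := by
  apply Polynomial.funext
  intro r
  simp [Polynomial.bernoulli_eval_one_add, add_comm r 1]

lemma bp_eval_add_one (n : ℕ) (t : ℂ) :
    (bp n).eval (t + 1) = (bp n).eval t + n * t ^ (n - 1) := by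
  have h := congrArg (fun p : ℚ[X] => (p.map (algebraMap ℚ ℂ)).eval t) (bernoulli_comp_add_one n)
  simpa [bp, Polynomial.map_comp, Polynomial.eval_comp] using h

lemma derivative_bp (n : ℕ) :
    Polynomial.derivative (bp (n + 1)) = ((n : ℂ) + 1) • bp n := by
  have h := congrArg (fun p : ℚ[X] => p.map (algebraMap ℚ ℂ))
    (Polynomial.derivative_bernoulli_add_one n)
  simpa [bp, Polynomial.derivative_map, smul_eq_C_mul, Polynomial.map_mul] using h

lemma const_of_periodic (P : Polynomial ℂ) (h : ∀ t : ℂ, P.eval (t + 1) = P.eval t) :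
    P = Polynomial.C (P.eval 0) := by
  have hn : ∀ n : ℕ, P.eval (n : ℂ) = P.eval 0 := by
    intro n
    induction n with
    | zero => simp
    | succ m ih => rw [Nat.cast_succ, h, ih]
  have hz : P - Polynomial.C (P.eval 0) = 0 := by
    apply Polynomial.eq_zero_of_infinite_isRoot
    apply Set.infinite_of_injective_forall_mem (f := fun n : ℕ => (n : ℂ))
    case hi => exact fun a b hab => Nat.cast_injective hab
    case hf => intro n; simp [Polynomial.IsRoot, hn n]
  linear_combination (norm := ring_nf) hz

lemma eval_diff_of_deriv_eq {Q Q' : Polynomial ℂ}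
    (h : Polynomial.derivative Q = Polynomial.derivative Q') :
    Q.eval 1 - Q.eval 0 = Q'.eval 1 - Q'.eval 0 := by
  have hd : Polynomial.derivative (Q - Q') = 0 := by rw [map_sub, h, sub_self]
  have h0 : (Q - Q').natDegree = 0 := Polynomial.natDegree_eq_zero_of_derivative_eq_zero hd
  have hc : Q - Q' = Polynomial.C ((Q - Q').coeff 0) := Polynomial.eq_C_of_natDegree_eq_zero h0
  have h1 := congrArg (Polynomial.eval 1) hc
  have h2 := congrArg (Polynomial.eval 0) hc
  simp only [Polynomial.eval_sub, Polynomial.eval_C] at h1 h2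
  linear_combination h1 - h2

lemma sumC (l : ℕ) : ∀ k : ℕ, ∑ j ∈ range (l + 1), (-1 : ℂ) ^ j * (l.choose j) / (k + j + 1)
    = (k.factorial * l.factorial : ℂ) / (k + l + 1).factorial := by
  induction l with
  | zero =>
    intro k
    rw [Finset.sum_range_one]
    have hne : ((k : ℂ) + 1) ≠ 0 := by
      have := Nat.cast_ne_zero (R := ℂ).mpr (Nat.succ_ne_zero k)
      push_cast at this; exact this
    have hfac : ((k + 0 + 1).factorial : ℂ) = (k + 1) * k.factorial := by
      show (((k + 1).factorial : ℕ) : ℂ) = _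
      rw [Nat.factorial_succ]; push_cast; ring
    have hfne : (k.factorial : ℂ) ≠ 0 := Nat.cast_ne_zero.mpr (Nat.factorial_ne_zero k)
    rw [hfac]
    field_simp
    simp
  | succ l ih =>
    intro k
    have hrec : ∑ j ∈ range (l + 1 + 1), (-1 : ℂ) ^ j * ((l+1).choose j) / (k + j + 1)
        = (∑ j ∈ range (l + 1), (-1 : ℂ) ^ j * (l.choose j) / (k + j + 1))
          - ∑ j ∈ range (l + 1), (-1 : ℂ) ^ j * (l.choose j) / (((k+1:ℕ):ℂ) + j + 1) := by
      rw [Finset.sum_range_succ' (fun j : ℕ => (-1 : ℂ) ^ j * ((l+1).choose j) / (k + j + 1)) (l+1)]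
      have hBsucc : ∑ j ∈ range (l + 1 + 1), (-1 : ℂ) ^ j * (l.choose j) / (k + j + 1)
          = ∑ j ∈ range (l + 1), (-1 : ℂ) ^ j * (l.choose j) / (k + j + 1) := by
        rw [Finset.sum_range_succ]
        simp
      rw [← hBsucc,
        Finset.sum_range_succ' (fun j : ℕ => (-1 : ℂ) ^ j * (l.choose j) / (k + j + 1)) (l+1)]
      have hmain : ∑ j ∈ range (l + 1),
            (-1 : ℂ) ^ (j+1) * ((l+1).choose (j+1)) / (k + ((j+1 : ℕ) : ℂ) + 1)
          = (∑ j ∈ range (l + 1), (-1 : ℂ) ^ (j+1) * (l.choose (j+1)) / (k + ((j+1:ℕ):ℂ) + 1))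
            - ∑ j ∈ range (l + 1), (-1 : ℂ) ^ j * (l.choose j) / (((k+1:ℕ):ℂ) + j + 1) := by
        rw [← Finset.sum_sub_distrib]
        refine Finset.sum_congr rfl fun j _ => ?_
        have hp : (((l+1).choose (j+1) : ℕ) : ℂ) = (l.choose j : ℂ) + (l.choose (j+1) : ℂ) := by
          rw [Nat.choose_succ_succ]; push_cast; ring
        rw [hp]
        push_cast
        ring
      push_cast at hmain ⊢
      rw [hmain]
      simp only [pow_zero, Nat.choose_zero_right, Nat.cast_one]
      ring
    rw [hrec, ih k, ih (k+1)]
    have e1 : ((k + (l+1) + 1).factorial : ℂ) = (k+l+2) * ((k + l + 1).factorial : ℕ) := by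
      have h : k + (l+1) + 1 = (k + l + 1) + 1 := by ring
      rw [h, Nat.factorial_succ]; push_cast; ring
    have e2 : (((k+1) + l + 1).factorial : ℂ) = (k+l+2) * ((k + l + 1).factorial : ℕ) := by
      have h : (k+1) + l + 1 = (k + l + 1) + 1 := by ring
      rw [h, Nat.factorial_succ]; push_cast; ring
    have e3 : ((k+1).factorial : ℂ) = ((k:ℂ)+1) * (k.factorial : ℕ) := by
      rw [Nat.factorial_succ]; push_cast; ring
    have e4 : (((l+1)).factorial : ℂ) = ((l:ℂ)+1) * (l.factorial : ℕ) := by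
      rw [Nat.factorial_succ]; push_cast; ring
    rw [e1, e2, e3, e4]
    have hf1 : (((k+l+1).factorial : ℕ) : ℂ) ≠ 0 := Nat.cast_ne_zero.mpr (Nat.factorial_ne_zero _)
    have hk2 : ((k:ℂ)+(l:ℂ)+2) ≠ 0 := by
      have := Nat.cast_ne_zero (R := ℂ).mpr (Nat.succ_ne_zero (k+l+1))
      push_cast at this
      intro h; apply this; linear_combination h
    field_simp
    ring

noncomputable def Ppoly (k l : ℕ) (x w : ℂ) : Polynomial ℂ :=
  Polynomial.C ((-1:ℂ)^k) * ∑ j ∈ range (k+1),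
      Polynomial.C ((k.choose j : ℂ) * x^(k-j) / ((l:ℂ)+j+1)) * bp (l+j+1)
    + Polynomial.C ((-1:ℂ)^l) * ∑ j ∈ range (l+1),
      Polynomial.C ((l.choose j : ℂ) * x^(l-j) / ((k:ℂ)+j+1)) *
        ((bp (k+j+1)).comp (Polynomial.C w - Polynomial.X))

noncomputable def Qpoly (k l : ℕ) (x w : ℂ) : Polynomial ℂ :=
  Polynomial.C ((-1:ℂ)^k) * ∑ j ∈ range (k+1),
      Polynomial.C ((k.choose j : ℂ) * x^(k-j) / ((l:ℂ)+j+1) / ((l:ℂ)+j+2)) * bp (l+j+2)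
    + Polynomial.C ((-1:ℂ)^l) * ∑ j ∈ range (l+1),
      Polynomial.C (-((l.choose j : ℂ) * x^(l-j) / ((k:ℂ)+j+1)) / ((k:ℂ)+j+2)) *
        ((bp (k+j+2)).comp (Polynomial.C w - Polynomial.X))

lemma Ppoly_eval (k l : ℕ) (x w u : ℂ) :
    (Ppoly k l x w).eval u
    = (-1:ℂ)^k * (∑ j ∈ range (k+1),
        ((k.choose j : ℂ) * x^(k-j) / ((l:ℂ)+j+1)) * (bp (l+j+1)).eval u)
      + (-1:ℂ)^l * (∑ j ∈ range (l+1),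
        ((l.choose j : ℂ) * x^(l-j) / ((k:ℂ)+j+1)) * (bp (k+j+1)).eval (w - u)) := by
  simp [Ppoly, Polynomial.eval_finset_sum]

lemma Qpoly_eval (k l : ℕ) (x w u : ℂ) :
    (Qpoly k l x w).eval u
    = (-1:ℂ)^k * (∑ j ∈ range (k+1),
        ((k.choose j : ℂ) * x^(k-j) / ((l:ℂ)+j+1) / ((l:ℂ)+j+2)) * (bp (l+j+2)).eval u)
      + (-1:ℂ)^l * (∑ j ∈ range (l+1),
        (-((l.choose j : ℂ) * x^(l-j) / ((k:ℂ)+j+1)) / ((k:ℂ)+j+2)) *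
          (bp (k+j+2)).eval (w - u)) := by
  simp [Qpoly, Polynomial.eval_finset_sum]

lemma derivative_Qpoly (k l : ℕ) (x w : ℂ) :
    Polynomial.derivative (Qpoly k l x w) = Ppoly k l x w := by
  unfold Qpoly Ppoly
  rw [Polynomial.derivative_add, Polynomial.derivative_C_mul, Polynomial.derivative_C_mul,
    Polynomial.derivative_sum, Polynomial.derivative_sum]
  congr 1
  · congr 1
    refine Finset.sum_congr rfl fun j _ => ?_
    rw [Polynomial.derivative_C_mul]
    have h : (l + j + 2) = (l + j + 1) + 1 := rfl
    rw [h, derivative_bp (l + j + 1)]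
    have hne : ((l:ℂ) + j + 2) ≠ 0 := by
      have := Nat.cast_ne_zero (R := ℂ).mpr (Nat.succ_ne_zero (l + j + 1))
      push_cast at this
      intro hc; exact this (by linear_combination hc)
    rw [smul_eq_C_mul, ← mul_assoc, ← Polynomial.C_mul]
    congr 2
    have hne1 : ((l:ℂ) + j + 1) ≠ 0 := by
      have := Nat.cast_ne_zero (R := ℂ).mpr (Nat.succ_ne_zero (l + j))
      push_cast at this
      intro hc; exact this (by linear_combination hc)
    push_cast
    field_simp
    ring
  · congr 1
    refine Finset.sum_congr rfl fun j _ => ?_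
    rw [Polynomial.derivative_C_mul, Polynomial.derivative_comp]
    have h : (k + j + 2) = (k + j + 1) + 1 := rfl
    rw [h, derivative_bp (k + j + 1)]
    have hne : ((k:ℂ) + j + 2) ≠ 0 := by
      have := Nat.cast_ne_zero (R := ℂ).mpr (Nat.succ_ne_zero (k + j + 1))
      push_cast at this
      intro hc; exact this (by linear_combination hc)
    rw [Polynomial.derivative_sub, Polynomial.derivative_C, Polynomial.derivative_X,
      Polynomial.smul_comp, smul_eq_C_mul]
    have h01 : ((0:Polynomial ℂ) - 1) = Polynomial.C (-1) := by simp
    rw [h01]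
    have hassoc : Polynomial.C (-((l.choose j : ℂ) * x^(l-j) / ((k:ℂ)+j+1)) / ((k:ℂ)+j+2)) *
          Polynomial.C (-1) * (Polynomial.C (((k+j+1 : ℕ):ℂ) + 1) *
            (bp (k+j+1)).comp (Polynomial.C w - Polynomial.X))
        = Polynomial.C ((-((l.choose j : ℂ) * x^(l-j) / ((k:ℂ)+j+1)) / ((k:ℂ)+j+2)) * (-1) *
            (((k+j+1 : ℕ):ℂ) + 1)) *
          (bp (k+j+1)).comp (Polynomial.C w - Polynomial.X) := by
      simp only [Polynomial.C_mul]
      ring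
    rw [← mul_assoc, hassoc]
    congr 2
    have hne1 : ((k:ℂ) + j + 1) ≠ 0 := by
      have := Nat.cast_ne_zero (R := ℂ).mpr (Nat.succ_ne_zero (k + j))
      push_cast at this
      intro hc; exact this (by linear_combination hc)
    push_cast
    field_simp
    ring

lemma Ppoly_periodic (k l : ℕ) (x t : ℂ) :
    (Ppoly k l x (1 - x)).eval (t + 1) = (Ppoly k l x (1 - x)).eval t := by
  rw [Ppoly_eval, Ppoly_eval]
  have h1 : ∑ j ∈ range (k+1),
        ((k.choose j : ℂ) * x^(k-j) / ((l:ℂ)+j+1)) * (bp (l+j+1)).eval (t+1)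
      = (∑ j ∈ range (k+1), ((k.choose j : ℂ) * x^(k-j) / ((l:ℂ)+j+1)) * (bp (l+j+1)).eval t)
        + ∑ j ∈ range (k+1), (k.choose j : ℂ) * x^(k-j) * t^(l+j) := by
    rw [← Finset.sum_add_distrib]
    refine Finset.sum_congr rfl fun j _ => ?_
    rw [bp_eval_add_one]
    have hsub : l + j + 1 - 1 = l + j := rfl
    rw [hsub]
    have hne1 : ((l:ℂ) + j + 1) ≠ 0 := by
      have := Nat.cast_ne_zero (R := ℂ).mpr (Nat.succ_ne_zero (l + j))
      push_cast at this
      intro hc; exact this (by linear_combination hc)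
    push_cast
    field_simp
  have h2 : ∑ j ∈ range (l+1),
        ((l.choose j : ℂ) * x^(l-j) / ((k:ℂ)+j+1)) * (bp (k+j+1)).eval ((1-x) - (t+1))
      = (∑ j ∈ range (l+1),
          ((l.choose j : ℂ) * x^(l-j) / ((k:ℂ)+j+1)) * (bp (k+j+1)).eval ((1-x) - t))
        - ∑ j ∈ range (l+1), (l.choose j : ℂ) * x^(l-j) * (-x-t)^(k+j) := by
    rw [← Finset.sum_sub_distrib]
    refine Finset.sum_congr rfl fun j _ => ?_
    have hs : (1 - x) - (t+1) = -x - t := by ring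
    have e : (1 - x) - t = (-x - t) + 1 := by ring
    rw [hs, e, bp_eval_add_one]
    have hsub : k + j + 1 - 1 = k + j := rfl
    rw [hsub]
    have hne1 : ((k:ℂ) + j + 1) ≠ 0 := by
      have := Nat.cast_ne_zero (R := ℂ).mpr (Nat.succ_ne_zero (k + j))
      push_cast at this
      intro hc; exact this (by linear_combination hc)
    push_cast
    field_simp
    ring
  rw [h1, h2]
  have hE1 : ∑ j ∈ range (k+1), (k.choose j : ℂ) * x^(k-j) * t^(l+j) = t^l * (t+x)^k := by
    rw [add_pow, Finset.mul_sum]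
    refine Finset.sum_congr rfl fun j hj => ?_
    rw [pow_add]
    ring
  have hE2 : ∑ j ∈ range (l+1), (l.choose j : ℂ) * x^(l-j) * (-x-t)^(k+j)
      = (-x-t)^k * (-t)^l := by
    have h : (-t : ℂ) = (-x-t) + x := by ring
    rw [h, add_pow, Finset.mul_sum]
    refine Finset.sum_congr rfl fun j hj => ?_
    rw [pow_add]
    ring
  rw [hE1, hE2]
  have hnk : (-x-t : ℂ)^k = (-1)^k * (t+x)^k := by
    rw [show (-x-t : ℂ) = -(t+x) by ring, neg_pow]
  have hnl : (-t : ℂ)^l = (-1)^l * t^l := by rw [neg_pow]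
  rw [hnk, hnl]
  have h2l : (-1:ℂ)^(l*2) = 1 := by rw [mul_comm, pow_mul, neg_one_sq, one_pow]
  linear_combination (-((-1:ℂ)^k * t^l * (t+x)^k)) * h2l

end SymmBernoulliAux

open SymmBernoulliAux Polynomial in
theorem stmt_8 (k l : ℕ) (hk : 1 ≤ k) (hl : 1 ≤ l) (x y z : ℂ) (hxyz : x + y + z = 1) :
    (-1) ^ k *
        (∑ j ∈ Finset.range (k + 1),
          (k.choose j : ℂ) * x ^ (k - j) * (bernoulliPolyC (l + j + 1) y / (l + j + 1))) +
      (-1) ^ l *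
        (∑ j ∈ Finset.range (l + 1),
          (l.choose j : ℂ) * x ^ (l - j) * (bernoulliPolyC (k + j + 1) z / (k + j + 1)))
      = (-x) ^ (k + l + 1) / ((k + l + 1) * ((k + l).choose k)) := by
  set w : ℂ := 1 - x with hw
  have hz : z = w - y := by rw [hw]; linear_combination hxyz
  -- the LHS equals P.eval y
  have hLHS : (-1:ℂ) ^ k *
        (∑ j ∈ Finset.range (k + 1),
          (k.choose j : ℂ) * x ^ (k - j) * (bernoulliPolyC (l + j + 1) y / (l + j + 1))) +
      (-1:ℂ) ^ l *
        (∑ j ∈ Finset.range (l + 1),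
          (l.choose j : ℂ) * x ^ (l - j) * (bernoulliPolyC (k + j + 1) z / (k + j + 1)))
      = (Ppoly k l x w).eval y := by
    rw [Ppoly_eval]
    congr 1
    · congr 1
      refine Finset.sum_congr rfl fun j _ => ?_
      show _ = _ * (bp (l+j+1)).eval y
      rw [show bernoulliPolyC (l+j+1) y = (bp (l+j+1)).eval y from rfl]
      push_cast
      ring
    · congr 1
      refine Finset.sum_congr rfl fun j _ => ?_
      rw [hz, show bernoulliPolyC (k+j+1) (w - y) = (bp (k+j+1)).eval (w - y) from rfl]
      push_cast
      ring
  rw [hLHS]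
  -- P is constant
  have hconst : Ppoly k l x w = Polynomial.C ((Ppoly k l x w).eval 0) := by
    apply const_of_periodic
    intro t
    rw [hw]
    exact Ppoly_periodic k l x t
  set c : ℂ := (Ppoly k l x w).eval 0 with hc
  -- compute c via the antiderivative Q
  have hdQ : Polynomial.derivative (Qpoly k l x w)
      = Polynomial.derivative (Polynomial.C c * Polynomial.X) := by
    rw [derivative_Qpoly, hconst]
    simp
  have hint := eval_diff_of_deriv_eq hdQ
  have hQval : (Qpoly k l x w).eval 1 - (Qpoly k l x w).eval 0
      = (-1:ℂ)^l * ∑ j ∈ range (l+1),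
          ((l.choose j : ℂ) * x^(l-j) / ((k:ℂ)+j+1)) * (-x)^(k+j+1) := by
    rw [Qpoly_eval, Qpoly_eval]
    have h1 : ∀ j ∈ range (k+1), (bp (l+j+2)).eval (1:ℂ) = (bp (l+j+2)).eval 0 := by
      intro j _
      have := bp_eval_add_one (l+j+2) 0
      simpa using this
    have h2 : ∀ j ∈ range (l+1),
        (bp (k+j+2)).eval (w - 0) - (bp (k+j+2)).eval (w - 1)
          = ((k+j+2 : ℕ) : ℂ) * (-x)^(k+j+1) := by
      intro j _
      have hx1 : w - 0 = (-x) + 1 := by rw [hw]; ring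
      have hx2 : w - 1 = -x := by rw [hw]; ring
      rw [hx1, hx2, bp_eval_add_one]
      have hsub : k + j + 2 - 1 = k + j + 1 := rfl
      rw [hsub]
      ring
    have hfirst : ∑ j ∈ range (k+1),
          ((k.choose j : ℂ) * x^(k-j) / ((l:ℂ)+j+1) / ((l:ℂ)+j+2)) * (bp (l+j+2)).eval (1:ℂ)
        = ∑ j ∈ range (k+1),
          ((k.choose j : ℂ) * x^(k-j) / ((l:ℂ)+j+1) / ((l:ℂ)+j+2)) * (bp (l+j+2)).eval 0 := by
      refine Finset.sum_congr rfl fun j hj => ?_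
      rw [h1 j hj]
    have hsecond : ∑ j ∈ range (l+1),
          ((-((l.choose j : ℂ) * x^(l-j) / ((k:ℂ)+j+1)) / ((k:ℂ)+j+2)) *
            (bp (k+j+2)).eval (w - 1))
          - ∑ j ∈ range (l+1),
          ((-((l.choose j : ℂ) * x^(l-j) / ((k:ℂ)+j+1)) / ((k:ℂ)+j+2)) *
            (bp (k+j+2)).eval (w - 0))
        = ∑ j ∈ range (l+1), ((l.choose j : ℂ) * x^(l-j) / ((k:ℂ)+j+1)) * (-x)^(k+j+1) := by
      rw [← Finset.sum_sub_distrib]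
      refine Finset.sum_congr rfl fun j hj => ?_
      have hd := h2 j hj
      have hne : ((k:ℂ) + j + 2) ≠ 0 := by
        have := Nat.cast_ne_zero (R := ℂ).mpr (Nat.succ_ne_zero (k + j + 1))
        push_cast at this
        intro hcc; exact this (by linear_combination hcc)
      have hcast : ((k+j+2 : ℕ) : ℂ) = (k:ℂ) + j + 2 := by push_cast; ring
      rw [hcast] at hd
      have hd' : (bp (k+j+2)).eval (w - 0)
          = (bp (k+j+2)).eval (w - 1) + ((k:ℂ)+j+2) * (-x)^(k+j+1) := by
        linear_combination hd
      rw [hd']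
      have hne1 : ((k:ℂ) + j + 1) ≠ 0 := by
        have := Nat.cast_ne_zero (R := ℂ).mpr (Nat.succ_ne_zero (k + j))
        push_cast at this
        intro hcc; exact this (by linear_combination hcc)
      field_simp
      ring
    rw [hfirst] at *
    linear_combination ((-1:ℂ)^l) * hsecond
  have hcval : c = (-1:ℂ)^l * ∑ j ∈ range (l+1),
      ((l.choose j : ℂ) * x^(l-j) / ((k:ℂ)+j+1)) * (-x)^(k+j+1) := by
    rw [← hQval, hint]
    simp
  -- finish: evaluate the sum
  rw [hconst, Polynomial.eval_C, hcval]
  have hsum : ∑ j ∈ range (l+1), ((l.choose j : ℂ) * x^(l-j) / ((k:ℂ)+j+1)) * (-x)^(k+j+1)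
      = (-1:ℂ)^(k+1) * x^(k+l+1) *
        ∑ j ∈ range (l+1), (-1:ℂ)^j * (l.choose j) / ((k:ℂ)+j+1) := by
    rw [Finset.mul_sum]
    refine Finset.sum_congr rfl fun j hj => ?_
    have hj' : j ≤ l := Nat.lt_succ_iff.mp (Finset.mem_range.mp hj)
    have hxp : x^(l-j) * x^(k+j+1) = x^(k+l+1) := by
      rw [← pow_add]; congr 1; omega
    have hnx : (-x : ℂ)^(k+j+1) = (-1:ℂ)^(k+1) * (-1:ℂ)^j * x^(k+j+1) := by
      rw [neg_pow, ← pow_add]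
      congr 2
      omega
    rw [hnx]
    linear_combination ((l.choose j : ℂ) * (-1:ℂ)^(k+1) * (-1:ℂ)^j / ((k:ℂ)+j+1)) * hxp
  rw [hsum, sumC l k]
  have hchoose : ((k+l).choose k : ℂ) * k.factorial * l.factorial = (k+l).factorial := by
    have hn := Nat.add_choose_mul_factorial_mul_factorial l k
    rw [Nat.add_comm l k] at hn
    have hn' : (k+l).choose k * k.factorial * l.factorial = (k+l).factorial := by
      rw [← hn]; ring
    exact_mod_cast hn'
  have hfs : ((k+l+1).factorial : ℂ) = ((k:ℂ)+l+1) * ((k+l).factorial : ℕ) := by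
    rw [Nat.factorial_succ]; push_cast; ring
  have hnegx : (-x : ℂ)^(k+l+1) = (-1:ℂ)^(k+l+1) * x^(k+l+1) := by rw [neg_pow]
  have hsign : (-1:ℂ)^l * (-1:ℂ)^(k+1) = (-1:ℂ)^(k+l+1) := by
    rw [← pow_add]; congr 1; omega
  have hne1 : (((k+l).factorial : ℕ) : ℂ) ≠ 0 := Nat.cast_ne_zero.mpr (Nat.factorial_ne_zero _)
  have hne2 : ((k:ℂ)+l+1) ≠ 0 := by
    have := Nat.cast_ne_zero (R := ℂ).mpr (Nat.succ_ne_zero (k+l))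
    push_cast at this
    intro hcc; exact this (by linear_combination hcc)
  have hne3 : (((k+l).choose k : ℕ) : ℂ) ≠ 0 :=
    Nat.cast_ne_zero.mpr (Nat.choose_pos (Nat.le_add_right k l)).ne'
  have hnek : ((k.factorial : ℕ) : ℂ) ≠ 0 := Nat.cast_ne_zero.mpr (Nat.factorial_ne_zero _)
  have hnel : ((l.factorial : ℕ) : ℂ) ≠ 0 := Nat.cast_ne_zero.mpr (Nat.factorial_ne_zero _)
  rw [hnegx, hfs]
  push_cast
  rw [← hsign]
  field_simp
  linear_combination (x^(k+l+1)) * hchoose
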